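/- arXiv:2007.03830 — 3 statements merged into one kernel-verified Lean document; each statement's English description precedes it below -/
import Mathlib

section
/- Let $f_i : \mathbb{R} \to \mathbb{R} \cup \{+\infty\}$, $i = 1, \dots, N$, be proper closed strictly convex functions with $\mathrm{dom}\, f_i \subset [0,1]$, and let $F(w) = \sum_{i=1}^N f_i(w^i) + \delta_\Delta(w)$. Fix $\psi_1 \in \mathbb{R}^N$, $\gamma > 0$, and an index $k$. Then for every $j \neq k$, $\frac{\partial F^*}{\partial \psi^j}(\psi_1 + \gamma e_k) \leq \frac{\partial F^*}{\partial \psi^j}(\psi_1)$, where $e_k$ is the $k$-th standard basis vector. -/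
noncomputable section
open scoped BigOperators Classical

abbrev E (N : ℕ) := EuclideanSpace ℝ (Fin N)

def simplex (N : ℕ) : Set (E N) := {w | (∑ i, w i) = 1 ∧ ∀ i, 0 ≤ w i}

/-- Strict convexity (on the effective domain) for extended-real-valued functions on ℝ. -/
def StrictConvex1 (f : ℝ → EReal) : Prop :=
  ∀ x y : ℝ, f x ≠ ⊤ → f y ≠ ⊤ → x ≠ y → ∀ t : ℝ, 0 < t → t < 1 →
    f (t * x + (1 - t) * y) < (t : EReal) * f x + ((1 - t : ℝ) : EReal) * f y

/-- One-dimensional subdifferential of an extended-real-valued function. -/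
def subdiff1 (f : ℝ → EReal) (x : ℝ) : Set ℝ :=
  {p | ∀ y : ℝ, f x + ((p * (y - x) : ℝ) : EReal) ≤ f y}

/-- The convex (Legendre–Fenchel) conjugate. -/
def conj {N : ℕ} (F : E N → EReal) (ψ : E N) : EReal :=
  ⨆ w : E N, ((inner ℝ ψ w : ℝ) : EReal) - F w

namespace Stmt2Aux

open Filter Topology

lemma sum_coe {ι} (s : Finset ι) (r : ι → ℝ) :
    (∑ i ∈ s, ((r i : ℝ) : EReal)) = ((∑ i ∈ s, r i : ℝ) : EReal) :=
  (map_sum (⟨⟨Real.toEReal, EReal.coe_zero⟩, EReal.coe_add⟩ : ℝ →+ EReal) r s).symm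

lemma sum_ne_bot {ι} (s : Finset ι) (x : ι → EReal) (h : ∀ i ∈ s, x i ≠ ⊥) :
    (∑ i ∈ s, x i) ≠ ⊥ := by
  classical
  induction s using Finset.induction with
  | empty => simp
  | @insert a s ha ih =>
    rw [Finset.sum_insert ha, Ne, EReal.add_eq_bot_iff]
    push_neg
    exact ⟨h a (Finset.mem_insert_self a s), ih fun i hi => h i (Finset.mem_insert_of_mem hi)⟩

lemma mem_ne_top_of_sum_ne_top {ι} {s : Finset ι} {x : ι → EReal}
    (hb : ∀ i ∈ s, x i ≠ ⊥) (h : (∑ i ∈ s, x i) ≠ ⊤) : ∀ i ∈ s, x i ≠ ⊤ := by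
  classical
  intro i hi hc
  apply h
  rw [← Finset.add_sum_erase s x hi, hc,
    EReal.top_add_of_ne_bot (sum_ne_bot _ _ fun j hj => hb j (Finset.mem_of_mem_erase hj))]

lemma sum_eq_coe_toReal {ι} {s : Finset ι} {x : ι → EReal}
    (hb : ∀ i ∈ s, x i ≠ ⊥) (ht : ∀ i ∈ s, x i ≠ ⊤) :
    (∑ i ∈ s, x i) = ((∑ i ∈ s, (x i).toReal : ℝ) : EReal) := by
  rw [← sum_coe]
  exact Finset.sum_congr rfl fun i hi => (EReal.coe_toReal (ht i hi) (hb i hi)).symm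

lemma lsc_bddBelow (f : ℝ → EReal) (hf : LowerSemicontinuous f) (hbot : ∀ x, f x ≠ ⊥) :
    ∃ B : ℝ, ∀ x ∈ Set.Icc (0:ℝ) 1, (B : EReal) ≤ f x := by
  have hb : ∀ x : ℝ, ∃ b : ℝ, (b : EReal) < f x := fun x => by
    rcases EReal.lt_iff_exists_real_btwn.1 (bot_lt_iff_ne_bot.2 (hbot x)) with ⟨b, _, hb2⟩
    exact ⟨b, hb2⟩
  choose b hbb using hb
  obtain ⟨t, -, hcover⟩ := isCompact_Icc.elim_nhds_subcover
    (fun x => {z | (b x : EReal) < f z}) (fun x _ => hf x (b x) (hbb x))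
  have htne : t.Nonempty := by
    rcases Finset.eq_empty_or_nonempty t with h | h
    · exfalso
      have := hcover (Set.mem_Icc.2 ⟨le_refl 0, zero_le_one⟩)
      simp [h] at this
    · exact h
  refine ⟨t.inf' htne b, fun x hx => ?_⟩
  rcases Set.mem_iUnion₂.1 (hcover hx) with ⟨i, hit, hxi⟩
  exact le_trans (EReal.coe_le_coe_iff.2 (Finset.inf'_le b hit)) (le_of_lt hxi)

lemma exists_theta {N : ℕ} (d : Fin N → ℝ) (hsum : ∑ i, d i = 0) (j k : Fin N) (hjk : j ≠ k) :
    ∃ θ : Fin N → ℝ, (∀ i, 0 ≤ θ i ∧ θ i ≤ 1) ∧ (∑ i, θ i * d i = 0) ∧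
      0 ≤ θ j * d j ∧ 0 ≤ d k * (1 - θ k) := by
  classical
  set Q : ℝ := ∑ i ∈ Finset.univ.filter (fun i => i ≠ k ∧ 0 < d i), d i with hQdef
  set Pm : ℝ := ∑ i ∈ Finset.univ.filter (fun i => i ≠ k ∧ i ≠ j ∧ d i < 0), d i with hPdef
  set J : ℝ := if d j < 0 then d j else 0 with hJdef
  have hQ : 0 ≤ Q := Finset.sum_nonneg fun i hi => (Finset.mem_filter.1 hi).2.2.le
  have hPm : Pm ≤ 0 := Finset.sum_nonpos fun i hi => (Finset.mem_filter.1 hi).2.2.2.le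
  have hJ : J ≤ 0 := by
    rw [hJdef]; split_ifs with h
    exacts [h.le, le_refl 0]
  have hiden : d k + Q + Pm + J = 0 := by
    have hpt : ∀ i : Fin N, d i =
        (if i = k then d i else 0) + (if i ≠ k ∧ 0 < d i then d i else 0)
        + (if i ≠ k ∧ i ≠ j ∧ d i < 0 then d i else 0)
        + (if i = j ∧ d i < 0 then d i else 0) := by
      intro i
      rcases eq_or_ne i k with rfl | hik
      · have hkj : ¬(i = j) := fun h => hjk h.symm
        simp [hkj]
      · rcases lt_trichotomy (d i) 0 with hneg | hzero | hpos
        · rcases eq_or_ne i j with rfl | hij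
          · simp [hik, hneg, not_lt.2 hneg.le]
          · simp [hik, hij, hneg, not_lt.2 hneg.le]
        · simp [hzero]
        · simp [hik, hpos, not_lt.2 hpos.le]
    have h4 : ∀ i : Fin N, (if i = j ∧ d i < 0 then d i else 0)
        = (if i = j then (if d i < 0 then d i else 0) else 0) := by
      intro i; split_ifs with h1 h2 h3 <;> tauto
    calc d k + Q + Pm + J
        = (∑ i, if i = k then d i else 0) + (∑ i, if i ≠ k ∧ 0 < d i then d i else 0)
          + (∑ i, if i ≠ k ∧ i ≠ j ∧ d i < 0 then d i else 0)
          + (∑ i : Fin N, if i = j ∧ d i < 0 then d i else 0) := by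
          rw [Finset.sum_ite_eq' Finset.univ k d]
          rw [Finset.sum_filter] at hQdef hPdef
          simp only [Finset.mem_univ, if_true, ← hQdef, ← hPdef]
          congr 1
          rw [Finset.sum_congr rfl (fun i _ => h4 i),
            Finset.sum_ite_eq' Finset.univ j (fun i => if d i < 0 then d i else 0)]
          simp [hJdef]
      _ = ∑ i, d i := by
          rw [← Finset.sum_add_distrib, ← Finset.sum_add_distrib, ← Finset.sum_add_distrib]
          exact Finset.sum_congr rfl fun i _ => (hpt i).symm
      _ = 0 := hsum
  obtain ⟨α, β, c, hα0, hα1, hβ0, hβ1, hc0, hc1, heq, hterm⟩ :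
      ∃ α β c : ℝ, 0 ≤ α ∧ α ≤ 1 ∧ 0 ≤ β ∧ β ≤ 1 ∧ 0 ≤ c ∧ c ≤ 1 ∧
        c * d k + α * Q + β * Pm = 0 ∧ 0 ≤ d k * (1 - c) := by
    rcases le_or_gt (d k) (-Pm) with hA | hB
    · rcases le_or_gt (d k) 0 with hk0 | hk1
      · rcases eq_or_ne Q 0 with hQ0 | hQ0
        · refine ⟨0, 0, 1, le_refl _, zero_le_one, le_refl _, zero_le_one, zero_le_one,
            le_refl _, ?_, ?_⟩
          · have hdk : d k = 0 := le_antisymm hk0 (by nlinarith)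
            rw [hdk, hQ0]; ring
          · nlinarith
        · have hQpos : 0 < Q := lt_of_le_of_ne hQ (Ne.symm hQ0)
          refine ⟨(-d k) / Q, 0, 1, div_nonneg (neg_nonneg.2 hk0) hQ, ?_, le_refl _,
            zero_le_one, zero_le_one, le_refl _, ?_, by nlinarith⟩
          · rw [div_le_one hQpos]; nlinarith
          · field_simp; ring
      · have hPpos : 0 < -Pm := lt_of_lt_of_le hk1 hA
        refine ⟨0, d k / (-Pm), 1, le_refl _, zero_le_one, div_nonneg hk1.le hPpos.le, ?_,
          zero_le_one, le_refl _, ?_, by nlinarith⟩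
        · rw [div_le_one hPpos]; exact hA
        · rw [div_neg, neg_mul, div_mul_cancel₀ _ (neg_pos.1 hPpos).ne]; ring
    · have hk1 : 0 < d k := lt_of_le_of_lt (by linarith) hB
      refine ⟨0, 1, (-Pm) / d k, le_refl _, zero_le_one, zero_le_one, le_refl _,
        div_nonneg (neg_nonneg.2 hPm) hk1.le, ?_, ?_, ?_⟩
      · rw [div_le_one hk1]; exact hB.le
      · field_simp; ring
      · have hc1' : (-Pm) / d k ≤ 1 := by rw [div_le_one hk1]; exact hB.le
        nlinarith
  refine ⟨fun i => if i = k then c else if 0 < d i then α else if d i < 0 ∧ i ≠ j then β else 0,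
    ?_, ?_, ?_, ?_⟩
  · intro i
    dsimp only
    split_ifs
    · exact ⟨hc0, hc1⟩
    · exact ⟨hα0, hα1⟩
    · exact ⟨hβ0, hβ1⟩
    · exact ⟨le_refl 0, zero_le_one⟩
  · have hpt : ∀ i : Fin N,
        (if i = k then c else if 0 < d i then α else if d i < 0 ∧ i ≠ j then β else 0) * d i
        = (if i = k then c * d i else 0) + (if i ≠ k ∧ 0 < d i then α * d i else 0)
          + (if i ≠ k ∧ i ≠ j ∧ d i < 0 then β * d i else 0) := by
      intro i
      rcases eq_or_ne i k with rfl | hik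
      · simp
      · rcases lt_trichotomy (d i) 0 with hneg | hzero | hpos
        · rcases eq_or_ne i j with rfl | hij
          · simp [hik, hneg, not_lt.2 hneg.le]
          · simp [hik, hij, hneg, not_lt.2 hneg.le]
        · simp [hzero]
        · simp [hik, hpos, not_lt.2 hpos.le]
    rw [Finset.sum_congr rfl (fun i _ => hpt i), Finset.sum_add_distrib, Finset.sum_add_distrib,
      Finset.sum_ite_eq' Finset.univ k (fun i => c * d i)]
    have h2 : (∑ i : Fin N, if i ≠ k ∧ 0 < d i then α * d i else 0) = α * Q := by
      rw [← Finset.sum_filter, hQdef, Finset.mul_sum]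
    have h3 : (∑ i : Fin N, if i ≠ k ∧ i ≠ j ∧ d i < 0 then β * d i else 0) = β * Pm := by
      rw [← Finset.sum_filter, hPdef, Finset.mul_sum]
    rw [h2, h3]
    simpa using heq
  · dsimp only
    rw [if_neg hjk]
    rcases lt_trichotomy (d j) 0 with hneg | hzero | hpos
    · simp [not_lt.2 hneg.le]
    · simp [hzero]
    · rw [if_pos hpos]; exact mul_nonneg hα0 hpos.le
  · simpa using hterm

lemma inner_eq {N : ℕ} (ψ w : E N) : (inner ℝ ψ w : ℝ) = ∑ i, ψ i * w i := by
  simp [PiLp.inner_apply, RCLike.inner_apply, mul_comm]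

section FStruct

variable {N : ℕ} {f : Fin N → ℝ → EReal} {F : E N → EReal}

lemma F_ne_bot (hb : ∀ i x, f i x ≠ ⊥)
    (hF : ∀ w, F w = (∑ i, f i (w i)) + (if w ∈ simplex N then (0 : EReal) else ⊤))
    (w : E N) : F w ≠ ⊥ := by
  rw [hF w, Ne, EReal.add_eq_bot_iff]
  push_neg
  constructor
  · exact sum_ne_bot _ _ fun i _ => hb i (w i)
  · split_ifs <;> simp

lemma F_struct (hb : ∀ i x, f i x ≠ ⊥)
    (hF : ∀ w, F w = (∑ i, f i (w i)) + (if w ∈ simplex N then (0 : EReal) else ⊤))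
    {u : E N} (hu : F u ≠ ⊤) :
    u ∈ simplex N ∧ (∀ i, f i (u i) ≠ ⊤) ∧
      F u = ((∑ i, (f i (u i)).toReal : ℝ) : EReal) := by
  have hsimp : u ∈ simplex N := by
    by_contra hs
    apply hu
    rw [hF u, if_neg hs, EReal.add_top_of_ne_bot (sum_ne_bot _ _ fun i _ => hb i (u i))]
  have hFu : F u = ∑ i, f i (u i) := by rw [hF u, if_pos hsimp, add_zero]
  have hst : (∑ i, f i (u i)) ≠ ⊤ := hFu ▸ hu
  have hne : ∀ i ∈ Finset.univ, f i (u i) ≠ ⊤ :=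
    mem_ne_top_of_sum_ne_top (fun i _ => hb i (u i)) hst
  refine ⟨hsimp, fun i => hne i (Finset.mem_univ i), ?_⟩
  rw [hFu, sum_eq_coe_toReal (fun i _ => hb i (u i)) hne]

lemma F_val (hb : ∀ i x, f i x ≠ ⊥)
    (hF : ∀ w, F w = (∑ i, f i (w i)) + (if w ∈ simplex N then (0 : EReal) else ⊤))
    {u : E N} (hu : u ∈ simplex N) (ht : ∀ i, f i (u i) ≠ ⊤) :
    F u = ((∑ i, (f i (u i)).toReal : ℝ) : EReal) := by
  rw [hF u, if_pos hu, add_zero, sum_eq_coe_toReal (fun i _ => hb i (u i)) (fun i _ => ht i)]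

lemma simplex_coord_mem {u : E N} (hu : u ∈ simplex N) (i : Fin N) :
    u i ∈ Set.Icc (0:ℝ) 1 := by
  refine ⟨hu.2 i, ?_⟩
  calc u i ≤ ∑ l, u l := Finset.single_le_sum (fun l _ => hu.2 l) (Finset.mem_univ i)
    _ = 1 := hu.1

lemma conj_ne_bot (hb : ∀ i x, f i x ≠ ⊥)
    (hF : ∀ w, F w = (∑ i, f i (w i)) + (if w ∈ simplex N then (0 : EReal) else ⊤))
    {w₀ : E N} (hw₀ : F w₀ ≠ ⊤) (ψ : E N) : conj F ψ ≠ ⊥ := by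
  have h1 : ((inner ℝ ψ w₀ : ℝ) : EReal) - F w₀ ≤ conj F ψ :=
    le_iSup (fun w => ((inner ℝ ψ w : ℝ) : EReal) - F w) w₀
  obtain ⟨-, -, hval⟩ := F_struct hb hF hw₀
  intro hc
  rw [hc, le_bot_iff, hval, ← EReal.coe_sub] at h1
  exact EReal.coe_ne_bot _ h1

lemma conj_ne_top (hb : ∀ i x, f i x ≠ ⊥)
    (hF : ∀ w, F w = (∑ i, f i (w i)) + (if w ∈ simplex N then (0 : EReal) else ⊤))
    {B : Fin N → ℝ} (hB : ∀ i, ∀ x ∈ Set.Icc (0:ℝ) 1, (B i : EReal) ≤ f i x)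
    (ψ : E N) : conj F ψ ≠ ⊤ := by
  have hbound : conj F ψ ≤ (((∑ i, |ψ i|) - ∑ i, B i : ℝ) : EReal) := by
    refine iSup_le fun w => ?_
    by_cases hw : F w = ⊤
    · rw [hw]
      rw [EReal.sub_top]
      exact bot_le
    · obtain ⟨hsimp, hne, hval⟩ := F_struct hb hF hw
      rw [hval, ← EReal.coe_sub, EReal.coe_le_coe_iff]
      have h1 : (inner ℝ ψ w : ℝ) ≤ ∑ i, |ψ i| := by
        rw [inner_eq]
        refine Finset.sum_le_sum fun i _ => ?_
        have hwi := simplex_coord_mem hsimp i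
        calc ψ i * w i ≤ |ψ i| * w i := mul_le_mul_of_nonneg_right (le_abs_self _) hwi.1
          _ ≤ |ψ i| * 1 := mul_le_mul_of_nonneg_left hwi.2 (abs_nonneg _)
          _ = |ψ i| := mul_one _
      have h2 : (∑ i, B i) ≤ ∑ i, (f i (w i)).toReal := by
        refine Finset.sum_le_sum fun i _ => ?_
        have := hB i (w i) (simplex_coord_mem hsimp i)
        rw [← EReal.coe_toReal (hne i) (hb i (w i)), EReal.coe_le_coe_iff] at this
        exact this
      linarith
  intro hc
  rw [hc, top_le_iff] at hbound
  exact EReal.coe_ne_top _ hbound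

lemma le_conj_toReal (hb : ∀ i x, f i x ≠ ⊥)
    (hF : ∀ w, F w = (∑ i, f i (w i)) + (if w ∈ simplex N then (0 : EReal) else ⊤))
    {ψ : E N} (hct : conj F ψ ≠ ⊤) {w : E N} (hw : F w ≠ ⊤) :
    (inner ℝ ψ w : ℝ) - (F w).toReal ≤ (conj F ψ).toReal := by
  obtain ⟨-, -, hval⟩ := F_struct hb hF hw
  have h1 : ((inner ℝ ψ w : ℝ) : EReal) - F w ≤ conj F ψ :=
    le_iSup (fun w => ((inner ℝ ψ w : ℝ) : EReal) - F w) w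
  rw [hval, ← EReal.coe_sub] at h1
  have h2 := EReal.toReal_le_toReal h1 (EReal.coe_ne_bot _) hct
  rw [EReal.toReal_coe] at h2
  rw [hval, EReal.toReal_coe]
  exact h2

lemma conj_toReal_le (hb : ∀ i x, f i x ≠ ⊥)
    (hF : ∀ w, F w = (∑ i, f i (w i)) + (if w ∈ simplex N then (0 : EReal) else ⊤))
    {ψ : E N} (hcb : conj F ψ ≠ ⊥) {c : ℝ}
    (hc : ∀ w, F w ≠ ⊤ → (inner ℝ ψ w : ℝ) - (F w).toReal ≤ c) :
    (conj F ψ).toReal ≤ c := by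
  have h1 : conj F ψ ≤ (c : EReal) := by
    refine iSup_le fun w => ?_
    by_cases hw : F w = ⊤
    · rw [hw, EReal.sub_top]; exact bot_le
    · obtain ⟨-, -, hval⟩ := F_struct hb hF hw
      rw [hval, ← EReal.coe_sub, EReal.coe_le_coe_iff]
      have h2 := hc w hw
      rw [hval, EReal.toReal_coe] at h2
      exact h2
  have h3 := EReal.toReal_le_toReal h1 hcb (EReal.coe_ne_top _)
  rwa [EReal.toReal_coe] at h3

lemma coord_convex (f0 : ℝ → EReal) (hs : StrictConvex1 f0) (hb : ∀ x, f0 x ≠ ⊥)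
    {u v θ : ℝ} (h0 : 0 ≤ θ) (h1 : θ ≤ 1) (hu : f0 u ≠ ⊤) (hv : f0 v ≠ ⊤) :
    f0 (u + θ * (v - u)) ≠ ⊤ ∧ f0 (v - θ * (v - u)) ≠ ⊤ ∧
      (f0 (u + θ * (v - u))).toReal + (f0 (v - θ * (v - u))).toReal
        ≤ (f0 u).toReal + (f0 v).toReal := by
  set a := (f0 u).toReal with ha
  set b := (f0 v).toReal with hbdef
  have hfa : f0 u = (a : EReal) := (EReal.coe_toReal hu (hb u)).symm
  have hfb : f0 v = (b : EReal) := (EReal.coe_toReal hv (hb v)).symm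
  have key : ∀ s : ℝ, 0 ≤ s → s ≤ 1 →
      f0 (s * u + (1 - s) * v) ≤ ((s * a + (1 - s) * b : ℝ) : EReal) := by
    intro s hs0 hs1
    rcases eq_or_ne u v with rfl | huv
    · have hab : a = b := by
        have := hfa.symm.trans hfb
        exact_mod_cast this
      have heq : s * u + (1 - s) * u = u := by ring
      rw [heq, hfa, EReal.coe_le_coe_iff]
      rw [← hab]; nlinarith
    · rcases eq_or_lt_of_le hs0 with rfl | hs0'
      · have heq : (0:ℝ) * u + (1 - 0) * v = v := by ring
        rw [heq, hfb, EReal.coe_le_coe_iff]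
        nlinarith
      · rcases eq_or_lt_of_le hs1 with rfl | hs1'
        · have heq : (1:ℝ) * u + (1 - 1) * v = u := by ring
          rw [heq, hfa, EReal.coe_le_coe_iff]
          nlinarith
        · have hlt := hs u v hu hv huv s hs0' hs1'
          rw [hfa, hfb] at hlt
          refine hlt.le.trans (le_of_eq ?_)
          norm_cast
  have k1 := key (1 - θ) (by linarith) (by linarith)
  have k2 := key θ h0 h1
  rw [show (1 - θ) * u + (1 - (1 - θ)) * v = u + θ * (v - u) by ring] at k1
  rw [show θ * u + (1 - θ) * v = v - θ * (v - u) by ring] at k2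
  have hwt : f0 (u + θ * (v - u)) ≠ ⊤ := (k1.trans_lt (EReal.coe_lt_top _)).ne
  have hzt : f0 (v - θ * (v - u)) ≠ ⊤ := (k2.trans_lt (EReal.coe_lt_top _)).ne
  refine ⟨hwt, hzt, ?_⟩
  have t1 := EReal.toReal_le_toReal k1 (hb _) (EReal.coe_ne_top _)
  have t2 := EReal.toReal_le_toReal k2 (hb _) (EReal.coe_ne_top _)
  rw [EReal.toReal_coe] at t1 t2
  linarith

lemma line_apply {N : ℕ} (ψ : E N) (t : ℝ) (j i : Fin N) :
    (ψ + t • EuclideanSpace.single j (1:ℝ)) i = ψ i + t * (if i = j then 1 else 0) := by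
  simp [EuclideanSpace.single_apply]

lemma submod (hb : ∀ i x, f i x ≠ ⊥) (hstrict : ∀ i, StrictConvex1 (f i))
    (hF : ∀ w, F w = (∑ i, f i (w i)) + (if w ∈ simplex N then (0 : EReal) else ⊤))
    (hcb : ∀ ψ : E N, conj F ψ ≠ ⊥) (hct : ∀ ψ : E N, conj F ψ ≠ ⊤)
    (ψ₁ : E N) {t γ : ℝ} (ht : 0 < t) (hγ : 0 < γ) {j k : Fin N} (hjk : j ≠ k) :
    (conj F (ψ₁ + t • EuclideanSpace.single j (1:ℝ) + γ • EuclideanSpace.single k (1:ℝ))).toReal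
      + (conj F ψ₁).toReal
    ≤ (conj F (ψ₁ + t • EuclideanSpace.single j (1:ℝ))).toReal
      + (conj F (ψ₁ + γ • EuclideanSpace.single k (1:ℝ))).toReal := by
  set ψ := ψ₁ + t • EuclideanSpace.single j (1:ℝ) with hψdef
  set φ := ψ₁ + γ • EuclideanSpace.single k (1:ℝ) with hφdef
  set σ := ψ₁ + t • EuclideanSpace.single j (1:ℝ) + γ • EuclideanSpace.single k (1:ℝ) with hσdef
  have hψi : ∀ i, ψ i = ψ₁ i + t * (if i = j then 1 else 0) := fun i => line_apply ψ₁ t j i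
  have hφi : ∀ i, φ i = ψ₁ i + γ * (if i = k then 1 else 0) := fun i => line_apply ψ₁ γ k i
  have hσi : ∀ i, σ i = ψ₁ i + t * (if i = j then 1 else 0) + γ * (if i = k then 1 else 0) := by
    intro i
    rw [hσdef, line_apply (ψ₁ + t • EuclideanSpace.single j (1:ℝ)) γ k i, line_apply ψ₁ t j i]
  have hkey : ∀ u v : E N, F u ≠ ⊤ → F v ≠ ⊤ →
      ((inner ℝ σ u : ℝ) - (F u).toReal) + ((inner ℝ ψ₁ v : ℝ) - (F v).toReal)
        ≤ (conj F ψ).toReal + (conj F φ).toReal := by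
    intro u v hu hv
    obtain ⟨husimp, hut, huval⟩ := F_struct hb hF hu
    obtain ⟨hvsimp, hvt, hvval⟩ := F_struct hb hF hv
    have hdsum : ∑ i, (v i - u i) = 0 := by
      rw [Finset.sum_sub_distrib, hvsimp.1, husimp.1, sub_self]
    obtain ⟨θ, hθ01, hθsum, hθj, hθk⟩ := exists_theta (fun i => v i - u i) hdsum j k hjk
    set w : E N := WithLp.toLp 2 (fun i => u i + θ i * (v i - u i)) with hwdef
    set z : E N := WithLp.toLp 2 (fun i => v i - θ i * (v i - u i)) with hzdef
    have hwapp : ∀ i, w i = u i + θ i * (v i - u i) := fun i => rfl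
    have hzapp : ∀ i, z i = v i - θ i * (v i - u i) := fun i => rfl
    have hwsimp : w ∈ simplex N := by
      constructor
      · calc (∑ i, w i) = (∑ i, u i) + ∑ i, θ i * (v i - u i) := by
              rw [← Finset.sum_add_distrib]
          _ = 1 := by rw [husimp.1, hθsum, add_zero]
      · intro i
        have h1 := (hθ01 i).1
        have h2 := (hθ01 i).2
        have h3 := husimp.2 i
        have h4 := hvsimp.2 i
        have e1 : (0:ℝ) ≤ (1 - θ i) * u i := mul_nonneg (by linarith) h3
        have e2 : (0:ℝ) ≤ θ i * v i := mul_nonneg h1 h4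
        rw [hwapp i]; nlinarith
    have hzsimp : z ∈ simplex N := by
      constructor
      · calc (∑ i, z i) = (∑ i, v i) - ∑ i, θ i * (v i - u i) := by
              rw [← Finset.sum_sub_distrib]
          _ = 1 := by rw [hvsimp.1, hθsum, sub_zero]
      · intro i
        have h1 := (hθ01 i).1
        have h2 := (hθ01 i).2
        have h3 := husimp.2 i
        have h4 := hvsimp.2 i
        have e1 : (0:ℝ) ≤ θ i * u i := mul_nonneg h1 h3
        have e2 : (0:ℝ) ≤ (1 - θ i) * v i := mul_nonneg (by linarith) h4
        rw [hzapp i]; nlinarith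
    have hcc : ∀ i : Fin N, f i (w i) ≠ ⊤ ∧ f i (z i) ≠ ⊤ ∧
        (f i (w i)).toReal + (f i (z i)).toReal ≤ (f i (u i)).toReal + (f i (v i)).toReal :=
      fun i => coord_convex (f i) (hstrict i) (hb i) (hθ01 i).1 (hθ01 i).2 (hut i) (hvt i)
    have hwval := F_val hb hF hwsimp (fun i => (hcc i).1)
    have hzval := F_val hb hF hzsimp (fun i => (hcc i).2.1)
    have hwF : F w ≠ ⊤ := by rw [hwval]; exact EReal.coe_ne_top _
    have hzF : F z ≠ ⊤ := by rw [hzval]; exact EReal.coe_ne_top _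
    have hFsum : (F w).toReal + (F z).toReal ≤ (F u).toReal + (F v).toReal := by
      rw [hwval, hzval, huval, hvval, EReal.toReal_coe, EReal.toReal_coe,
        EReal.toReal_coe, EReal.toReal_coe, ← Finset.sum_add_distrib, ← Finset.sum_add_distrib]
      exact Finset.sum_le_sum fun i _ => (hcc i).2.2
    have hinner : (inner ℝ ψ w : ℝ) + (inner ℝ φ z : ℝ) - (inner ℝ σ u : ℝ) - (inner ℝ ψ₁ v : ℝ)
        = t * (θ j * (v j - u j)) + γ * ((v k - u k) * (1 - θ k)) := by
      rw [inner_eq, inner_eq, inner_eq, inner_eq]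
      have hptw : ∀ i : Fin N, ψ i * w i + φ i * z i - σ i * u i - ψ₁ i * v i
          = (if i = j then t * (θ j * (v j - u j))
             else if i = k then γ * ((v k - u k) * (1 - θ k)) else 0) := by
        intro i
        rw [hψi i, hφi i, hσi i, hwapp i, hzapp i]
        rcases eq_or_ne i j with rfl | hij
        · rw [if_pos rfl, if_neg hjk, if_pos rfl]
          ring
        · rcases eq_or_ne i k with rfl | hik
          · rw [if_neg hij, if_pos rfl, if_neg hij, if_pos rfl]
            ring
          · rw [if_neg hij, if_neg hik, if_neg hij, if_neg hik]
            ring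
      calc (∑ i, ψ i * w i) + (∑ i, φ i * z i) - (∑ i, σ i * u i) - (∑ i, ψ₁ i * v i)
          = ∑ i, (ψ i * w i + φ i * z i - σ i * u i - ψ₁ i * v i) := by
            rw [← Finset.sum_add_distrib, ← Finset.sum_sub_distrib, ← Finset.sum_sub_distrib]
        _ = ∑ i, (if i = j then t * (θ j * (v j - u j))
              else if i = k then γ * ((v k - u k) * (1 - θ k)) else 0) :=
            Finset.sum_congr rfl fun i _ => hptw i
        _ = t * (θ j * (v j - u j)) + γ * ((v k - u k) * (1 - θ k)) := by
            have hsplit : ∀ i : Fin N, (if i = j then t * (θ j * (v j - u j))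
                else if i = k then γ * ((v k - u k) * (1 - θ k)) else 0)
                = (if i = j then t * (θ j * (v j - u j)) else 0)
                  + (if i = k then γ * ((v k - u k) * (1 - θ k)) else 0) := by
              intro i
              rcases eq_or_ne i j with rfl | hij
              · rw [if_pos rfl, if_pos rfl, if_neg hjk, add_zero]
              · rw [if_neg hij, if_neg hij, zero_add]
            rw [Finset.sum_congr rfl fun i _ => hsplit i, Finset.sum_add_distrib,
              Finset.sum_ite_eq' Finset.univ j, Finset.sum_ite_eq' Finset.univ k]
            simp
    have hpos : 0 ≤ t * (θ j * (v j - u j)) + γ * ((v k - u k) * (1 - θ k)) :=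
      add_nonneg (mul_nonneg ht.le hθj) (mul_nonneg hγ.le hθk)
    have ha1 : (inner ℝ ψ w : ℝ) - (F w).toReal ≤ (conj F ψ).toReal :=
      le_conj_toReal hb hF (hct ψ) hwF
    have ha2 : (inner ℝ φ z : ℝ) - (F z).toReal ≤ (conj F φ).toReal :=
      le_conj_toReal hb hF (hct φ) hzF
    linarith
  have h1 : (conj F σ).toReal ≤ (conj F ψ).toReal + (conj F φ).toReal - (conj F ψ₁).toReal := by
    refine conj_toReal_le hb hF (hcb σ) (fun u hu => ?_)
    have h2 : (conj F ψ₁).toReal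
        ≤ (conj F ψ).toReal + (conj F φ).toReal - ((inner ℝ σ u : ℝ) - (F u).toReal) := by
      refine conj_toReal_le hb hF (hcb ψ₁) (fun v hv => ?_)
      linarith [hkey u v hu hv]
    linarith
  linarith

end FStruct

lemma dir_deriv {N : ℕ} {h : E N → ℝ} {gp p : E N} (hgp : HasGradientAt h gp p) (u : E N) :
    HasDerivAt (fun s : ℝ => h (p + s • u)) (inner ℝ gp u : ℝ) 0 := by
  have hline : HasDerivAt (fun s : ℝ => p + s • u) u 0 := by
    simpa using ((hasDerivAt_id (0:ℝ)).smul_const u).const_add p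
  have hf := hgp.hasFDerivAt
  have hp0 : p + (0:ℝ) • u = p := by simp
  have hf' : HasFDerivAt h (InnerProductSpace.toDual ℝ (E N) gp) (p + (0:ℝ) • u) := by
    rw [hp0]; exact hf
  have hc := hf'.comp_hasDerivAt 0 hline
  simp only [InnerProductSpace.toDual_apply_apply] at hc
  exact hc

lemma deriv_nonneg_of_right {q : ℝ → ℝ} {q' : ℝ} (hq : HasDerivAt q q' 0)
    (hmono : ∀ s : ℝ, 0 < s → q 0 ≤ q s) : 0 ≤ q' := by
  have ht := hasDerivAt_iff_tendsto_slope.1 hq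
  have ht' : Tendsto (slope q 0) (𝓝[>] 0) (𝓝 q') :=
    ht.mono_left (nhdsWithin_mono 0 (fun s hs => ne_of_gt hs))
  refine ge_of_tendsto ht' ?_
  filter_upwards [self_mem_nhdsWithin] with s hs
  have hs' : (0:ℝ) < s := hs
  rw [slope_def_field]
  exact div_nonneg (sub_nonneg.2 (hmono s hs')) (by linarith)

end Stmt2Aux

open Stmt2Aux in
theorem stmt2 {N : ℕ} (f : Fin N → ℝ → EReal)
    (hproper : ∀ i, (∃ x, f i x ≠ ⊤) ∧ ∀ x, f i x ≠ ⊥)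
    (hclosed : ∀ i, LowerSemicontinuous (f i))
    (hstrict : ∀ i, StrictConvex1 (f i))
    (hdom : ∀ i, {x | f i x ≠ ⊤} ⊆ Set.Icc (0 : ℝ) 1)
    (F : E N → EReal)
    (hF : ∀ w, F w = (∑ i, f i (w i)) + (if w ∈ simplex N then (0 : EReal) else ⊤))
    (g : E N → E N)
    (hg : ∀ ψ : E N, HasGradientAt (fun φ => (conj F φ).toReal) (g ψ) ψ)
    (ψ₁ : E N) (γ : ℝ) (hγ : 0 < γ) (k : Fin N) :
    ∀ j : Fin N, j ≠ k →
      g (ψ₁ + γ • EuclideanSpace.single k (1 : ℝ)) j ≤ g ψ₁ j := by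
  intro j hjk
  have hb : ∀ i x, f i x ≠ ⊥ := fun i x => (hproper i).2 x
  by_cases hprop : ∃ w₀ : E N, F w₀ ≠ ⊤
  · -- proper case
    obtain ⟨w₀, hw₀⟩ := hprop
    choose B hB using fun i => lsc_bddBelow (f i) (hclosed i) (fun x => hb i x)
    have hcb : ∀ ψ : E N, conj F ψ ≠ ⊥ := fun ψ => conj_ne_bot hb hF hw₀ ψ
    have hct : ∀ ψ : E N, conj F ψ ≠ ⊤ := fun ψ => conj_ne_top hb hF hB ψ
    set h : E N → ℝ := fun φ => (conj F φ).toReal with hhdef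
    set u : E N := EuclideanSpace.single j (1:ℝ) with hudef
    set ψ₂ : E N := ψ₁ + γ • EuclideanSpace.single k (1:ℝ) with hψ₂def
    have hd1 : HasDerivAt (fun s : ℝ => h (ψ₁ + s • u)) (inner ℝ (g ψ₁) u : ℝ) 0 :=
      dir_deriv (hg ψ₁) u
    have hd2 : HasDerivAt (fun s : ℝ => h (ψ₂ + s • u)) (inner ℝ (g ψ₂) u : ℝ) 0 :=
      dir_deriv (hg ψ₂) u
    have hq : HasDerivAt (fun s : ℝ => h (ψ₁ + s • u) - h (ψ₂ + s • u))
        ((inner ℝ (g ψ₁) u : ℝ) - (inner ℝ (g ψ₂) u : ℝ)) 0 := hd1.sub hd2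
    have hmono : ∀ s : ℝ, 0 < s →
        h (ψ₁ + (0:ℝ) • u) - h (ψ₂ + (0:ℝ) • u) ≤ h (ψ₁ + s • u) - h (ψ₂ + s • u) := by
      intro s hs
      have hsub := submod hb hstrict hF hcb hct ψ₁ hs hγ hjk
      have e1 : ψ₂ + s • u = ψ₁ + s • EuclideanSpace.single j (1:ℝ)
          + γ • EuclideanSpace.single k (1:ℝ) := by
        rw [hψ₂def, hudef]; abel
      have e2 : ψ₁ + (0:ℝ) • u = ψ₁ := by simp
      have e3 : ψ₂ + (0:ℝ) • u = ψ₂ := by simp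
      rw [e1, e2, e3]
      simp only [hhdef, hψ₂def, hudef]
      linarith
    have hkey := deriv_nonneg_of_right hq hmono
    have hiu1 : (inner ℝ (g ψ₁) u : ℝ) = g ψ₁ j := by
      rw [hudef]
      simp [EuclideanSpace.inner_single_right]
    have hiu2 : (inner ℝ (g ψ₂) u : ℝ) = g ψ₂ j := by
      rw [hudef]
      simp [EuclideanSpace.inner_single_right]
    rw [hiu1, hiu2] at hkey
    linarith
  · -- improper case : F ≡ ⊤, conj F ≡ ⊥, g ≡ 0
    push_neg at hprop
    have hbotconj : ∀ ψ : E N, conj F ψ = ⊥ := by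
      intro ψ
      have hterm : ∀ w : E N, ((inner ℝ ψ w : ℝ) : EReal) - F w = ⊥ := fun w => by
        rw [hprop w, EReal.sub_top]
      exact iSup_eq_bot.2 hterm
    have hfun : (fun φ : E N => (conj F φ).toReal) = fun _ => (0:ℝ) := by
      funext φ
      rw [hbotconj φ]
      simp
    have hzero : ∀ p : E N, g p = 0 := by
      intro p
      have hgp := hg p
      rw [hfun] at hgp
      exact hgp.unique (hasGradientAt_const p (0:ℝ))
    rw [hzero, hzero]
end
end

section
/- Let $f_i : \mathbb{R} \to \mathbb{R} \cup \{+\infty\}$, $i = 1, \dots, N$, be proper closed strictly convex functions with $\mathrm{dom}\, f_i \subset [0,1]$, and let $F(w) = \sum_{i=1}^N f_i(w^i) + \delta_\Delta(w)$. Fix $\psi_1 \in \mathbb{R}^N$, $\gamma \geq 0$, an index $k$, and set $\psi_2 = \psi_1 - \gamma e_k$. Then $\frac{\partial F^*}{\partial \psi^k}(\psi_1) - \frac{\partial F^*}{\partial \psi^k}(\psi_2) = \sum_{j \neq k} \left| \frac{\partial F^*}{\partial \psi^j}(\psi_1) - \frac{\partial F^*}{\partial \psi^j}(\psi_2) \right|$.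 -/
noncomputable section
open scoped BigOperators Classical

/-! ### Auxiliary lemmas -/

lemma my_sum_ne_bot {ι : Type*} {s : Finset ι} {a : ι → EReal} (h : ∀ i ∈ s, a i ≠ ⊥) :
    ∑ i ∈ s, a i ≠ ⊥ := by
  induction s using Finset.cons_induction with
  | empty => simp
  | cons i s hi ih =>
    rw [Finset.sum_cons]
    simp only [ne_eq, EReal.add_eq_bot_iff]
    push_neg
    exact ⟨h i (Finset.mem_cons_self i s), ih fun j hj => h j (Finset.mem_cons_of_mem hj)⟩

lemma my_sum_coe {ι : Type*} (s : Finset ι) (a : ι → ℝ) :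
    (∑ i ∈ s, ((a i : ℝ) : EReal)) = ((∑ i ∈ s, a i : ℝ) : EReal) := by
  induction s using Finset.cons_induction with
  | empty => simp
  | cons i s hi ih => rw [Finset.sum_cons, Finset.sum_cons, ih, ← EReal.coe_add]

lemma my_sum_two_diff {N : ℕ} {d : Fin N → ℝ} {j l : Fin N} (hjl : j ≠ l)
    (h : ∀ i, i ≠ j → i ≠ l → d i = 0) : ∑ i, d i = d j + d l := by
  rw [← Finset.sum_pair hjl]
  exact (Finset.sum_subset (Finset.subset_univ {j, l}) (by
    intro x _ hx
    simp only [Finset.mem_insert, Finset.mem_singleton] at hx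
    push_neg at hx
    exact h x hx.1 hx.2)).symm

lemma usc_exists_max {X : Type*} [TopologicalSpace X] {φ : X → EReal}
    (h : UpperSemicontinuous φ) {s : Set X} (hs : IsCompact s) (hne : s.Nonempty) :
    ∃ x ∈ s, ∀ y ∈ s, φ y ≤ φ x := by
  by_contra hcon
  push_neg at hcon
  have hcov : s ⊆ ⋃ y : s, φ ⁻¹' Set.Iio (φ y) := by
    intro x hx
    obtain ⟨y, hy, hxy⟩ := hcon x hx
    exact Set.mem_iUnion.2 ⟨⟨y, hy⟩, hxy⟩
  obtain ⟨t, ht⟩ := hs.elim_finite_subcover (fun y : s => φ ⁻¹' Set.Iio (φ y))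
      (fun y => h.isOpen_preimage _) hcov
  have htne : t.Nonempty := by
    rcases hne with ⟨x, hx⟩
    rcases Set.mem_iUnion₂.1 (ht hx) with ⟨y, hy, _⟩
    exact ⟨y, hy⟩
  obtain ⟨y₀, hy₀t, hy₀max⟩ := t.exists_max_image (fun y : s => φ y.1) htne
  rcases Set.mem_iUnion₂.1 (ht y₀.2) with ⟨z, hzt, hz⟩
  exact absurd (hy₀max z hzt) (not_le.2 hz)

lemma dom_mem {f : ℝ → EReal} (hf : StrictConvex1 f) (hbot : ∀ x, f x ≠ ⊥)
    {x y z : ℝ} (hx : f x ≠ ⊤) (hy : f y ≠ ⊤) (hxz : x ≤ z) (hzy : z ≤ y) : f z ≠ ⊤ := by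
  rcases eq_or_lt_of_le hxz with rfl | hxz
  · exact hx
  rcases eq_or_lt_of_le hzy with rfl | hzy
  · exact hy
  have hxy : x < y := hxz.trans hzy
  set t : ℝ := (y - z) / (y - x) with ht
  have h0 : 0 < t := div_pos (by linarith) (by linarith)
  have h1 : t < 1 := (div_lt_one (by linarith)).2 (by linarith)
  have he : t * (y - x) = y - z := by
    rw [ht]; exact div_mul_cancel₀ _ (by linarith)
  have hz : t * x + (1 - t) * y = z := by
    have : t * x + (1 - t) * y = y - t * (y - x) := by ring
    rw [this, he]; ring
  have hkey := hf x y hx hy hxy.ne t h0 h1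
  rw [hz] at hkey
  set a := (f x).toReal with ha
  set b := (f y).toReal with hb
  have hfx : f x = (a : EReal) := (EReal.coe_toReal hx (hbot x)).symm
  have hfy : f y = (b : EReal) := (EReal.coe_toReal hy (hbot y)).symm
  rw [hfx, hfy, ← EReal.coe_mul, ← EReal.coe_mul, ← EReal.coe_add] at hkey
  exact ne_top_of_lt hkey

lemma slope_lt {f : ℝ → EReal} (hf : StrictConvex1 f) (hbot : ∀ x, f x ≠ ⊥)
    {x y z : ℝ} (hx : f x ≠ ⊤) (hz : f z ≠ ⊤) (hxy : x < y) (hyz : y < z) :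
    ((f y).toReal - (f x).toReal) / (y - x) < ((f z).toReal - (f y).toReal) / (z - y) := by
  have hy : f y ≠ ⊤ := dom_mem hf hbot hx hz hxy.le hyz.le
  set t : ℝ := (z - y) / (z - x) with ht
  have hzx : (0:ℝ) < z - x := by linarith
  have h0 : 0 < t := div_pos (by linarith) hzx
  have h1 : t < 1 := (div_lt_one hzx).2 (by linarith)
  have he1 : t * (z - x) = z - y := by
    rw [ht]; exact div_mul_cancel₀ _ (by linarith)
  have he2 : (1 - t) * (z - x) = y - x := by
    have : (1 - t) * (z - x) = (z - x) - t * (z - x) := by ring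
    rw [this, he1]; ring
  have hyeq : t * x + (1 - t) * z = y := by
    have : t * x + (1 - t) * z = z - t * (z - x) := by ring
    rw [this, he1]; ring
  have hkey := hf x z hx hz (hxy.trans hyz).ne t h0 h1
  rw [hyeq] at hkey
  set a := (f x).toReal with ha
  set b := (f y).toReal with hb
  set c := (f z).toReal with hc
  have hfx : f x = (a : EReal) := (EReal.coe_toReal hx (hbot x)).symm
  have hfy : f y = (b : EReal) := (EReal.coe_toReal hy (hbot y)).symm
  have hfz : f z = (c : EReal) := (EReal.coe_toReal hz (hbot z)).symm
  rw [hfx, hfy, hfz, ← EReal.coe_mul, ← EReal.coe_mul, ← EReal.coe_add] at hkey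
  have hreal : b < t * a + (1 - t) * c := by exact_mod_cast hkey
  have h2 : b * (z - x) < a * (z - y) + c * (y - x) := by
    have := mul_lt_mul_of_pos_right hreal hzx
    calc b * (z - x) < (t * a + (1 - t) * c) * (z - x) := this
      _ = a * (t * (z - x)) + c * ((1 - t) * (z - x)) := by ring
      _ = a * (z - y) + c * (y - x) := by rw [he1, he2]
  rw [div_lt_div_iff₀ (by linarith) (by linarith)]
  nlinarith [h2]

lemma incr_lt {f : ℝ → EReal} (hf : StrictConvex1 f) (hbot : ∀ x, f x ≠ ⊥)
    {x1 x2 x3 x4 : ℝ} (h1 : f x1 ≠ ⊤) (h4 : f x4 ≠ ⊤)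
    (h12 : x1 < x2) (h23 : x2 ≤ x3) (h34 : x3 < x4) (heq : x2 - x1 = x4 - x3) :
    (f x2).toReal - (f x1).toReal < (f x4).toReal - (f x3).toReal := by
  rcases eq_or_lt_of_le h23 with rfl | h23'
  · have hs := slope_lt hf hbot h1 h4 h12 h34
    rw [div_lt_div_iff₀ (by linarith) (by linarith), ← heq] at hs
    have := (mul_lt_mul_iff_left₀ (show (0:ℝ) < x2 - x1 by linarith)).1 hs
    linarith
  · have hx2 : f x2 ≠ ⊤ := dom_mem hf hbot h1 h4 h12.le (by linarith)
    have hx3 : f x3 ≠ ⊤ := dom_mem hf hbot h1 h4 (by linarith) h34.le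
    have hA := slope_lt hf hbot h1 hx3 h12 h23'
    have hB := slope_lt hf hbot hx2 h4 h23' h34
    have hAB := hA.trans hB
    rw [div_lt_div_iff₀ (by linarith) (by linarith), ← heq] at hAB
    have := (mul_lt_mul_iff_left₀ (show (0:ℝ) < x2 - x1 by linarith)).1 hAB
    linarith

lemma lsc_sum {X : Type*} [TopologicalSpace X] {ι : Type*} (s : Finset ι) (a : ι → X → EReal)
    (h : ∀ i ∈ s, LowerSemicontinuous (a i)) (hb : ∀ i ∈ s, ∀ x, a i x ≠ ⊥) :
    LowerSemicontinuous (fun x => ∑ i ∈ s, a i x) := by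
  induction s using Finset.cons_induction with
  | empty => simpa using lowerSemicontinuous_const
  | cons i s hi ih =>
    simp only [Finset.sum_cons]
    refine (h i (Finset.mem_cons_self i s)).add'
      (ih (fun j hj => h j (Finset.mem_cons_of_mem hj)) (fun j hj => hb j (Finset.mem_cons_of_mem hj)))
      (fun x => EReal.continuousAt_add (Or.inr (my_sum_ne_bot fun j hj => hb j (Finset.mem_cons_of_mem hj) x))
        (Or.inl (hb i (Finset.mem_cons_self i s) x)))

lemma simplex_closed (N : ℕ) : IsClosed (simplex N) := by
  have h1 : IsClosed {w : E N | ∑ i, w i = 1} :=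
    isClosed_eq (continuous_finset_sum _ fun i _ => ((continuous_apply i).comp (PiLp.continuous_ofLp 2 _))) continuous_const
  have h2 : IsClosed {w : E N | ∀ i, 0 ≤ w i} := by
    have : {w : E N | ∀ i, 0 ≤ w i} = ⋂ i, {w : E N | 0 ≤ w i} := by ext; simp [Set.mem_iInter]
    rw [this]
    exact isClosed_iInter fun i => isClosed_le continuous_const ((continuous_apply i).comp (PiLp.continuous_ofLp 2 _))
  exact h1.inter h2

lemma simplex_compact (N : ℕ) : IsCompact (simplex N) := by
  apply Metric.isCompact_of_isClosed_isBounded (simplex_closed N)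
  rw [isBounded_iff_forall_norm_le]
  refine ⟨1, fun w hw => ?_⟩
  rw [EuclideanSpace.norm_eq]
  have hle : ∀ i, w i ≤ 1 := by
    intro i
    calc w i ≤ ∑ j, w j := Finset.single_le_sum (fun j _ => hw.2 j) (Finset.mem_univ i)
      _ = 1 := hw.1
  rw [show (1:ℝ) = Real.sqrt 1 by simp]
  refine Real.sqrt_le_sqrt ?_
  calc ∑ i, ‖w i‖ ^ 2 ≤ ∑ i, w i := by
        refine Finset.sum_le_sum fun i _ => ?_
        rw [Real.norm_eq_abs, abs_of_nonneg (hw.2 i)]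
        nlinarith [hw.2 i, hle i]
    _ = 1 := hw.1

lemma ind_lsc (N : ℕ) : LowerSemicontinuous (fun w : E N => if w ∈ simplex N then (0:EReal) else ⊤) := by
  rw [lowerSemicontinuous_iff_isClosed_preimage]
  intro y
  by_cases h0 : (0:EReal) ≤ y
  · by_cases htop : (⊤:EReal) ≤ y
    · have : (fun w : E N => if w ∈ simplex N then (0:EReal) else ⊤) ⁻¹' Set.Iic y = Set.univ := by
        ext w; simp only [Set.mem_preimage, Set.mem_Iic, Set.mem_univ, iff_true]
        split <;> [exact h0; exact htop]
      rw [this]; exact isClosed_univ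
    · have : (fun w : E N => if w ∈ simplex N then (0:EReal) else ⊤) ⁻¹' Set.Iic y = simplex N := by
        ext w; simp only [Set.mem_preimage, Set.mem_Iic]
        constructor
        · intro h
          by_contra hw
          rw [if_neg hw] at h
          exact htop h
        · intro h; rw [if_pos h]; exact h0
      rw [this]; exact simplex_closed N
  · have : (fun w : E N => if w ∈ simplex N then (0:EReal) else ⊤) ⁻¹' Set.Iic y = ∅ := by
      ext w; simp only [Set.mem_preimage, Set.mem_Iic, Set.mem_empty_iff_false, iff_false]
      intro h
      apply h0
      calc (0:EReal) ≤ if w ∈ simplex N then (0:EReal) else ⊤ := by split <;> simp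
        _ ≤ y := h
    rw [this]; exact isClosed_empty

lemma L_usc {N : ℕ} (f : Fin N → ℝ → EReal)
    (hbot : ∀ i x, f i x ≠ ⊥) (hlsc : ∀ i, LowerSemicontinuous (f i))
    (F : E N → EReal)
    (hF : ∀ w, F w = (∑ i, f i (w i)) + (if w ∈ simplex N then (0 : EReal) else ⊤))
    (ψ : E N) :
    UpperSemicontinuous (fun w : E N => ((inner ℝ ψ w : ℝ) : EReal) - F w) := by
  have hFlsc : LowerSemicontinuous F := by
    have hsum : LowerSemicontinuous (fun w : E N => ∑ i, f i (w i)) :=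
      lsc_sum Finset.univ (fun i (w : E N) => f i (w i))
        (fun i _ => show LowerSemicontinuous (fun w : E N => f i (w i)) from
          (hlsc i).comp ((continuous_apply i).comp (PiLp.continuous_ofLp 2 _)))
        (fun i _ (x : E N) => hbot i (x i))
    have := hsum.add' (ind_lsc N)
      (fun w => EReal.continuousAt_add
        (Or.inr (by split <;> simp))
        (Or.inl (my_sum_ne_bot (s := Finset.univ) fun i _ => hbot i (w i))))
    have heq : (fun w : E N => ∑ i, f i (w i) + if w ∈ simplex N then (0:EReal) else ⊤) = F := by
      ext w; rw [hF]
    rwa [heq] at this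
  have hneg : UpperSemicontinuous (fun w : E N => - F w) :=
    continuous_neg.comp_lowerSemicontinuous_antitone hFlsc fun _ _ h => EReal.neg_le_neg_iff.2 h
  have hc : Continuous (fun w : E N => ((inner ℝ ψ w : ℝ) : EReal)) :=
    continuous_coe_real_ereal.comp (Continuous.inner continuous_const continuous_id)
  have := hc.upperSemicontinuous.add' hneg
    (fun w => EReal.continuousAt_add (Or.inl (EReal.coe_ne_top _)) (Or.inl (EReal.coe_ne_bot _)))
  simpa [sub_eq_add_neg] using this

lemma grad_eq {N : ℕ} {u : E N → ℝ} {ψ gv w : E N}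
    (hg : HasGradientAt u gv ψ)
    (hsub : ∀ φ : E N, u ψ + inner ℝ w (φ - ψ) ≤ u φ) : gv = w := by
  have key : ∀ v : E N, (inner ℝ gv v : ℝ) = inner ℝ w v := by
    intro v
    have hψ0 : ψ + (0:ℝ) • v = ψ := by simp
    have hc : HasDerivAt (fun t : ℝ => ψ + t • v) v 0 := by
      simpa using ((hasDerivAt_id (0:ℝ)).smul_const v).const_add ψ
    have hfd : HasFDerivAt u (InnerProductSpace.toDual ℝ (E N) gv) (ψ + (0:ℝ) • v) := by
      rw [hψ0]; exact hg
    have hcomp : HasDerivAt (fun t : ℝ => u (ψ + t • v)) ((inner ℝ gv v : ℝ)) 0 := by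
      have := hfd.comp_hasDerivAt (0:ℝ) hc
      simp only [InnerProductSpace.toDual_apply_apply] at this
      exact this
    have hq : HasDerivAt (fun t : ℝ => u (ψ + t • v) - t * (inner ℝ w v : ℝ))
        ((inner ℝ gv v : ℝ) - (inner ℝ w v : ℝ)) 0 := by
      have h := hcomp.sub ((hasDerivAt_id (0:ℝ)).mul_const ((inner ℝ w v : ℝ)))
      simp only [one_mul] at h
      exact h
    have hmin : IsLocalMin (fun t : ℝ => u (ψ + t • v) - t * (inner ℝ w v : ℝ)) 0 := by
      apply Filter.Eventually.of_forall
      intro t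
      have h1 := hsub (ψ + t • v)
      have h2 : (inner ℝ w (ψ + t • v - ψ) : ℝ) = t * (inner ℝ w v : ℝ) := by
        rw [add_sub_cancel_left, real_inner_smul_right]
      simp only [h2] at h1
      simp only [zero_smul, add_zero, zero_mul, sub_zero]
      linarith
    have := hmin.hasDerivAt_eq_zero hq
    linarith
  have h0 : (inner ℝ (gv - w) (gv - w) : ℝ) = 0 := by
    rw [inner_sub_left, key (gv - w)]
    ring
  rw [inner_self_eq_zero] at h0
  exact sub_eq_zero.mp h0
theorem stmt3 {N : ℕ} (f : Fin N → ℝ → EReal)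
    (hproper : ∀ i, (∃ x, f i x ≠ ⊤) ∧ ∀ x, f i x ≠ ⊥)
    (hclosed : ∀ i, LowerSemicontinuous (f i))
    (hstrict : ∀ i, StrictConvex1 (f i))
    (hdom : ∀ i, {x | f i x ≠ ⊤} ⊆ Set.Icc (0 : ℝ) 1)
    (F : E N → EReal)
    (hF : ∀ w, F w = (∑ i, f i (w i)) + (if w ∈ simplex N then (0 : EReal) else ⊤))
    (g : E N → E N)
    (hg : ∀ ψ : E N, HasGradientAt (fun φ => (conj F φ).toReal) (g ψ) ψ)
    (ψ₁ : E N) (γ : ℝ) (hγ : 0 ≤ γ) (k : Fin N)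
    (ψ₂ : E N) (hψ₂ : ψ₂ = ψ₁ - γ • EuclideanSpace.single k (1 : ℝ)) :
    g ψ₁ k - g ψ₂ k = ∑ j ∈ Finset.univ.erase k, |g ψ₁ j - g ψ₂ j| := by
  classical
  have hbot : ∀ i x, f i x ≠ (⊥ : EReal) := fun i => (hproper i).2
  set P : E N → Prop := fun w => w ∈ simplex N ∧ ∀ i, f i (w i) ≠ ⊤ with hPdef
  set L : E N → E N → EReal := fun ψ w => ((inner ℝ ψ w : ℝ) : EReal) - F w with hLdef
  have hconjL : ∀ ψ, conj F ψ = ⨆ v, L ψ v := fun ψ => rfl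
  by_cases hD : ∃ w : E N, P w
  case neg =>
    -- degenerate case: F ≡ ⊤, conjugate ≡ ⊥, gradient ≡ 0
    have hFtop : ∀ w, F w = ⊤ := by
      intro w
      rw [hF]
      by_cases hΔ : w ∈ simplex N
      · have : ∃ i, f i (w i) = ⊤ := by
          by_contra hc
          push_neg at hc
          exact hD ⟨w, hΔ, hc⟩
        obtain ⟨i, hi⟩ := this
        rw [if_pos hΔ, add_zero, ← Finset.add_sum_erase _ _ (Finset.mem_univ i), hi,
          EReal.top_add_of_ne_bot (my_sum_ne_bot fun j _ => hbot j (w j))]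
      · rw [if_neg hΔ]
        exact EReal.add_top_of_ne_bot (my_sum_ne_bot fun j _ => hbot j (w j))
    have hconj_bot : ∀ ψ : E N, conj F ψ = ⊥ := by
      intro ψ
      rw [hconjL]
      have : ∀ v : E N, L ψ v = ⊥ := by
        intro v
        rw [hLdef]
        simp only
        rw [hFtop v, EReal.sub_top]
      simp [this]
    have hzero : ∀ ψ : E N, g ψ = 0 := by
      intro ψ
      refine grad_eq (hg ψ) ?_
      intro φ
      simp [hconj_bot]
    rw [hzero ψ₁, hzero ψ₂]
    simp
  case pos =>
    obtain ⟨w₀, hw₀⟩ := hD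
    set Fr : E N → ℝ := fun w => ∑ i, (f i (w i)).toReal with hFrdef
    set Gr : E N → E N → ℝ := fun ψ w => (inner ℝ ψ w : ℝ) - Fr w with hGrdef
    have hinner : ∀ (x y : E N), (inner ℝ x y : ℝ) = ∑ i, x i * y i := fun x y => by
      simp [PiLp.inner_apply, RCLike.inner_apply, conj_trivial, mul_comm]
    have hFD : ∀ w, P w → F w = ((Fr w : ℝ) : EReal) := by
      intro w hw
      rw [hF, if_pos hw.1, add_zero,
        show ∑ i, f i (w i) = ∑ i, (((f i (w i)).toReal : ℝ) : EReal) from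
          Finset.sum_congr rfl fun i _ => (EReal.coe_toReal (hw.2 i) (hbot i _)).symm,
        my_sum_coe]
    have hFtop : ∀ w, ¬ P w → F w = ⊤ := by
      intro w hw
      rw [hF]
      by_cases hΔ : w ∈ simplex N
      · have : ∃ i, f i (w i) = ⊤ := by
          by_contra hc
          push_neg at hc
          exact hw ⟨hΔ, hc⟩
        obtain ⟨i, hi⟩ := this
        rw [if_pos hΔ, add_zero, ← Finset.add_sum_erase _ _ (Finset.mem_univ i), hi,
          EReal.top_add_of_ne_bot (my_sum_ne_bot fun j _ => hbot j (w j))]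
      · rw [if_neg hΔ]
        exact EReal.add_top_of_ne_bot (my_sum_ne_bot fun j _ => hbot j (w j))
    have hLD : ∀ ψ w, P w → L ψ w = ((Gr ψ w : ℝ) : EReal) := by
      intro ψ w hw
      rw [hLdef]
      simp only
      rw [hFD w hw, hGrdef]
      simp only
      rw [← EReal.coe_sub]
    have hLbot : ∀ ψ w, ¬ P w → L ψ w = ⊥ := by
      intro ψ w hw
      rw [hLdef]
      simp only
      rw [hFtop w hw, EReal.sub_top]
    -- existence of a maximizer in the effective domain
    have hmax : ∀ ψ : E N, ∃ w, P w ∧ ∀ v : E N, L ψ v ≤ L ψ w := by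
      intro ψ
      have husc : UpperSemicontinuous (L ψ) := by
        rw [hLdef]
        exact L_usc f hbot hclosed F hF ψ
      obtain ⟨w, hwΔ, hwmax⟩ := usc_exists_max husc (simplex_compact N) ⟨w₀, hw₀.1⟩
      have hwP : P w := by
        by_contra hcon
        have h1 := hwmax w₀ hw₀.1
        rw [hLbot ψ w hcon, hLD ψ w₀ hw₀] at h1
        exact (EReal.coe_ne_bot _) (le_bot_iff.1 h1)
      refine ⟨w, hwP, fun v => ?_⟩
      by_cases hv : P v
      · exact hwmax v hv.1
      · rw [hLbot ψ v hv]; exact bot_le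
    -- real-valued optimality
    have hopt : ∀ ψ (w w' : E N), (∀ v, L ψ v ≤ L ψ w) → P w → P w' → Gr ψ w' ≤ Gr ψ w := by
      intro ψ w w' hmaxw hw hw'
      have := hmaxw w'
      rw [hLD ψ w' hw', hLD ψ w hw] at this
      exact_mod_cast this
    -- maximizer yields a subgradient of the conjugate
    have hsubgrad : ∀ ψ (w : E N), P w → (∀ v, L ψ v ≤ L ψ w) →
        ∀ φ : E N, (conj F ψ).toReal + inner ℝ w (φ - ψ) ≤ (conj F φ).toReal := by
      intro ψ w hw hmaxw φ
      obtain ⟨wφ, hwφ, hmaxφ⟩ := hmax φ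
      have h1 : conj F ψ = ((Gr ψ w : ℝ) : EReal) := by
        rw [hconjL, ← hLD ψ w hw]
        exact le_antisymm (iSup_le hmaxw) (le_iSup _ w)
      have h2 : conj F φ = ((Gr φ wφ : ℝ) : EReal) := by
        rw [hconjL, ← hLD φ wφ hwφ]
        exact le_antisymm (iSup_le hmaxφ) (le_iSup _ wφ)
      have h3 : Gr φ w ≤ Gr φ wφ := hopt φ wφ w hmaxφ hwφ hw
      rw [h1, h2, EReal.toReal_coe, EReal.toReal_coe]
      have h4 : (inner ℝ w (φ - ψ) : ℝ) = (inner ℝ φ w : ℝ) - (inner ℝ ψ w : ℝ) := by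
        rw [real_inner_comm, inner_sub_left]
      have e1 : Gr ψ w = (inner ℝ ψ w : ℝ) - Fr w := by rw [hGrdef]
      have e2 : Gr φ w = (inner ℝ φ w : ℝ) - Fr w := by rw [hGrdef]
      linarith
    obtain ⟨w₁, hw₁, hw₁max⟩ := hmax ψ₁
    obtain ⟨w₂, hw₂, hw₂max⟩ := hmax ψ₂
    have hg1 : g ψ₁ = w₁ := grad_eq (hg ψ₁) (hsubgrad ψ₁ w₁ hw₁ hw₁max)
    have hg2 : g ψ₂ = w₂ := grad_eq (hg ψ₂) (hsubgrad ψ₂ w₂ hw₂ hw₂max)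
    obtain ⟨hsum1, hnn1⟩ := hw₁.1
    obtain ⟨hsum2, hnn2⟩ := hw₂.1
    have hψ₂app : ∀ i, ψ₂ i = ψ₁ i - γ * (if i = k then 1 else 0) := by
      intro i
      rw [hψ₂]
      simp [EuclideanSpace.single_apply]
    -- the sum representation of Gr
    have hGrsum : ∀ ψ w, Gr ψ w = ∑ i, (ψ i * w i - (f i (w i)).toReal) := by
      intro ψ w
      rw [hGrdef]
      simp only
      rw [hinner, hFrdef]
      simp only
      rw [← Finset.sum_sub_distrib]
    -- cross-monotonicity via an exchange argument
    have hmono : ∀ j : Fin N, j ≠ k → w₁ j ≤ w₂ j := by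
      intro j hjk
      by_contra hcon
      push_neg at hcon
      have hex : ∃ l, w₁ l < w₂ l := by
        by_contra hc
        push_neg at hc
        have h := Finset.sum_lt_sum (fun i (_ : i ∈ Finset.univ) => hc i)
          ⟨j, Finset.mem_univ j, hcon⟩
        rw [hsum1, hsum2] at h
        exact lt_irrefl _ h
      obtain ⟨l, hl⟩ := hex
      have hlj : l ≠ j := fun h => absurd hl (by rw [h]; exact not_lt.2 hcon.le)
      have hjl : j ≠ l := hlj.symm
      set ε : ℝ := min ((w₁ j - w₂ j)/2) ((w₂ l - w₁ l)/2) with hεdef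
      have hεpos : 0 < ε := lt_min (by linarith) (by linarith)
      have hε1 : ε ≤ (w₁ j - w₂ j)/2 := min_le_left _ _
      have hε2 : ε ≤ (w₂ l - w₁ l)/2 := min_le_right _ _
      set w₁' : E N := WithLp.toLp 2 (fun i => if i = j then w₁ j - ε else if i = l then w₁ l + ε else w₁ i)
        with hw₁'def
      set w₂' : E N := WithLp.toLp 2 (fun i => if i = j then w₂ j + ε else if i = l then w₂ l - ε else w₂ i)
        with hw₂'def
      have hw₁'j : w₁' j = w₁ j - ε := by rw [hw₁'def]; simp
      have hw₁'l : w₁' l = w₁ l + ε := by rw [hw₁'def]; simp [hlj]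
      have hw₁'o : ∀ i, i ≠ j → i ≠ l → w₁' i = w₁ i := by
        intro i h1 h2; rw [hw₁'def]; simp [h1, h2]
      have hw₂'j : w₂' j = w₂ j + ε := by rw [hw₂'def]; simp
      have hw₂'l : w₂' l = w₂ l - ε := by rw [hw₂'def]; simp [hlj]
      have hw₂'o : ∀ i, i ≠ j → i ≠ l → w₂' i = w₂ i := by
        intro i h1 h2; rw [hw₂'def]; simp [h1, h2]
      have hbotj : ∀ x, f j x ≠ ⊥ := hbot j
      have hbotl : ∀ x, f l x ≠ ⊥ := hbot l
      have hfj1 : f j (w₁ j) ≠ ⊤ := hw₁.2 j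
      have hfj2 : f j (w₂ j) ≠ ⊤ := hw₂.2 j
      have hfl1 : f l (w₁ l) ≠ ⊤ := hw₁.2 l
      have hfl2 : f l (w₂ l) ≠ ⊤ := hw₂.2 l
      have hdjm : f j (w₁ j - ε) ≠ ⊤ :=
        dom_mem (hstrict j) hbotj hfj2 hfj1 (by linarith) (by linarith)
      have hdjp : f j (w₂ j + ε) ≠ ⊤ :=
        dom_mem (hstrict j) hbotj hfj2 hfj1 (by linarith) (by linarith)
      have hdlp : f l (w₁ l + ε) ≠ ⊤ :=
        dom_mem (hstrict l) hbotl hfl1 hfl2 (by linarith) (by linarith)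
      have hdlm : f l (w₂ l - ε) ≠ ⊤ :=
        dom_mem (hstrict l) hbotl hfl1 hfl2 (by linarith) (by linarith)
      have hP1' : P w₁' := by
        refine ⟨⟨?_, ?_⟩, ?_⟩
        · have hd := my_sum_two_diff (d := fun i => w₁' i - w₁ i) hjl
            (fun i hij hil => by show w₁' i - w₁ i = 0; rw [hw₁'o i hij hil]; ring)
          simp only at hd
          have hzero : ∑ i, w₁' i - ∑ i, w₁ i = 0 := by
            rw [← Finset.sum_sub_distrib, hd, hw₁'j, hw₁'l]; ring
          linarith
        · intro i
          rcases eq_or_ne i j with rfl | hij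
          · rw [hw₁'j]; linarith [hnn1 i, hnn2 i]
          rcases eq_or_ne i l with rfl | hil
          · rw [hw₁'l]; linarith [hnn1 i]
          · rw [hw₁'o i hij hil]; exact hnn1 i
        · intro i
          rcases eq_or_ne i j with rfl | hij
          · rw [hw₁'j]; exact hdjm
          rcases eq_or_ne i l with rfl | hil
          · rw [hw₁'l]; exact hdlp
          · rw [hw₁'o i hij hil]; exact hw₁.2 i
      have hP2' : P w₂' := by
        refine ⟨⟨?_, ?_⟩, ?_⟩
        · have hd := my_sum_two_diff (d := fun i => w₂' i - w₂ i) hjl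
            (fun i hij hil => by show w₂' i - w₂ i = 0; rw [hw₂'o i hij hil]; ring)
          simp only at hd
          have hzero : ∑ i, w₂' i - ∑ i, w₂ i = 0 := by
            rw [← Finset.sum_sub_distrib, hd, hw₂'j, hw₂'l]; ring
          linarith
        · intro i
          rcases eq_or_ne i j with rfl | hij
          · rw [hw₂'j]; linarith [hnn2 i]
          rcases eq_or_ne i l with rfl | hil
          · rw [hw₂'l]; linarith [hnn1 i, hnn2 i]
          · rw [hw₂'o i hij hil]; exact hnn2 i
        · intro i
          rcases eq_or_ne i j with rfl | hij
          · rw [hw₂'j]; exact hdjp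
          rcases eq_or_ne i l with rfl | hil
          · rw [hw₂'l]; exact hdlm
          · rw [hw₂'o i hij hil]; exact hw₂.2 i
      have hA : Gr ψ₁ w₁' ≤ Gr ψ₁ w₁ := hopt ψ₁ w₁ w₁' hw₁max hw₁ hP1'
      have hB : Gr ψ₂ w₂' ≤ Gr ψ₂ w₂ := hopt ψ₂ w₂ w₂' hw₂max hw₂ hP2'
      have hdA : Gr ψ₁ w₁' - Gr ψ₁ w₁ =
          ψ₁ l * ε - ψ₁ j * ε - (f j (w₁ j - ε)).toReal + (f j (w₁ j)).toReal
            - (f l (w₁ l + ε)).toReal + (f l (w₁ l)).toReal := by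
        have hd := my_sum_two_diff
          (d := fun i => (ψ₁ i * w₁' i - (f i (w₁' i)).toReal) - (ψ₁ i * w₁ i - (f i (w₁ i)).toReal))
          hjl (fun i hij hil => by
            show (ψ₁ i * w₁' i - (f i (w₁' i)).toReal) - (ψ₁ i * w₁ i - (f i (w₁ i)).toReal) = 0
            rw [hw₁'o i hij hil]; ring)
        simp only at hd
        rw [hGrsum ψ₁ w₁', hGrsum ψ₁ w₁, ← Finset.sum_sub_distrib, hd, hw₁'j, hw₁'l]
        ring
      have hdB : Gr ψ₂ w₂' - Gr ψ₂ w₂ =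
          ψ₂ j * ε - ψ₂ l * ε - (f j (w₂ j + ε)).toReal + (f j (w₂ j)).toReal
            - (f l (w₂ l - ε)).toReal + (f l (w₂ l)).toReal := by
        have hd := my_sum_two_diff
          (d := fun i => (ψ₂ i * w₂' i - (f i (w₂' i)).toReal) - (ψ₂ i * w₂ i - (f i (w₂ i)).toReal))
          hjl (fun i hij hil => by
            show (ψ₂ i * w₂' i - (f i (w₂' i)).toReal) - (ψ₂ i * w₂ i - (f i (w₂ i)).toReal) = 0
            rw [hw₂'o i hij hil]; ring)
        simp only at hd
        rw [hGrsum ψ₂ w₂', hGrsum ψ₂ w₂, ← Finset.sum_sub_distrib, hd, hw₂'j, hw₂'l]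
        ring
      have hC := incr_lt (hstrict j) hbotj hfj2 hfj1
        (x2 := w₂ j + ε) (x3 := w₁ j - ε) (by linarith) (by linarith) (by linarith) (by ring)
      have hDD := incr_lt (hstrict l) hbotl hfl1 hfl2
        (x2 := w₁ l + ε) (x3 := w₂ l - ε) (by linarith) (by linarith) (by linarith) (by ring)
      have hψj : ψ₂ j = ψ₁ j := by rw [hψ₂app j]; simp [hjk]
      have hψjε : ψ₂ j * ε = ψ₁ j * ε := by rw [hψj]
      have hψl : ψ₂ l ≤ ψ₁ l := by
        rw [hψ₂app l]
        split <;> [linarith; linarith]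
      have hprod : ψ₂ l * ε ≤ ψ₁ l * ε := mul_le_mul_of_nonneg_right hψl hεpos.le
      linarith
    -- conclude
    rw [hg1, hg2]
    have hsumeq : w₁ k - w₂ k = ∑ j ∈ Finset.univ.erase k, (w₂ j - w₁ j) := by
      have e1 := Finset.add_sum_erase Finset.univ w₁ (Finset.mem_univ k)
      have e2 := Finset.add_sum_erase Finset.univ w₂ (Finset.mem_univ k)
      rw [Finset.sum_sub_distrib]
      rw [hsum1] at e1
      rw [hsum2] at e2
      linarith
    rw [hsumeq]
    refine Finset.sum_congr rfl fun j hj => ?_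
    rw [abs_sub_comm, abs_of_nonneg (sub_nonneg.2 (hmono j (Finset.ne_of_mem_erase hj)))]
end
end

section
/- Let $A = \prod_{i=1}^N [a_i, b_i]$ and $B = \prod_{i=1}^N [c_i, d_i]$ be boxes in $\mathbb{R}^N$ with $a_i \leq b_i$ and $c_i \leq d_i$, and let $\Delta = \{w : \sum_i w^i = 1,\ w^i \geq 0\}$ be the probability simplex. If $A \cap \Delta \neq \emptyset$ and $B \cap \Delta \neq \emptyset$, then the Hausdorff distance satisfies $d_{\mathcal{H}}(A \cap \Delta, B \cap \Delta) \leq 4 \sum_{i=1}^N \max(|a_i - c_i|, |b_i - d_i|)$. -/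
noncomputable section
open scoped BigOperators

lemma l2_le_l1 {N : ℕ} (x y : E N) : dist x y ≤ ∑ i, |x i - y i| := by
  rw [EuclideanSpace.dist_eq]
  have h1 : ∑ i, dist (x i) (y i) ^ 2 ≤ (∑ i, |x i - y i|) ^ 2 := by
    simp only [Real.dist_eq]
    exact Finset.sum_sq_le_sq_sum_of_nonneg (fun i _ => abs_nonneg _)
  calc √(∑ i, dist (x i) (y i) ^ 2) ≤ √((∑ i, |x i - y i|) ^ 2) := Real.sqrt_le_sqrt h1
    _ = ∑ i, |x i - y i| := Real.sqrt_sq (Finset.sum_nonneg fun i _ => abs_nonneg _)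

lemma adjust {N : ℕ} (z w : Fin N → ℝ) (hzw : ∀ i, z i ≤ w i)
    (hs : ∑ i, z i ≤ 1) (hσ : 1 ≤ ∑ i, w i) :
    ∃ y : Fin N → ℝ, (∀ i, z i ≤ y i ∧ y i ≤ w i) ∧ ∑ i, y i = 1 := by
  set s := ∑ i, z i with hs'
  set σ := ∑ i, w i with hσ'
  rcases eq_or_lt_of_le (le_trans hs hσ) with h | h
  · -- s = σ, so s = 1
    have hs1 : s = 1 := by linarith
    exact ⟨z, fun i => ⟨le_refl _, hzw i⟩, hs1⟩
  · set lam := (1 - s) / (σ - s) with hlam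
    have hd : (0:ℝ) < σ - s := sub_pos.mpr h
    have hlam0 : 0 ≤ lam := div_nonneg (by linarith) (le_of_lt hd)
    have hlam1 : lam ≤ 1 := by
      rw [hlam, div_le_one hd]; linarith
    refine ⟨fun i => z i + lam * (w i - z i), fun i => ?_, ?_⟩
    · constructor
      · show z i ≤ z i + lam * (w i - z i)
        nlinarith [mul_nonneg hlam0 (sub_nonneg.mpr (hzw i))]
      · show z i + lam * (w i - z i) ≤ w i
        nlinarith [mul_nonneg (by linarith : (0:ℝ) ≤ 1 - lam) (sub_nonneg.mpr (hzw i))]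
    · have hsum : ∑ i, (z i + lam * (w i - z i)) = s + lam * (σ - s) := by
        rw [Finset.sum_add_distrib, ← Finset.mul_sum, Finset.sum_sub_distrib, ← hs', ← hσ']
      rw [hsum, hlam, div_mul_cancel₀ _ (ne_of_gt hd)]
      ring

/-- Key adjustment lemma: given a point `z` in the box `[c,d]` with nonnegative
coordinates, and a point `q` in the box intersected with the simplex, there is a
point `y` of the box intersected with the simplex with `∑ |y i - z i| ≤ |∑ z - 1|`. -/
lemma key {N : ℕ} (c d : Fin N → ℝ) (q : Fin N → ℝ)
    (hqB : ∀ i, c i ≤ q i ∧ q i ≤ d i) (hq1 : ∑ i, q i = 1) (hq0 : ∀ i, 0 ≤ q i)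
    (z : Fin N → ℝ) (hz : ∀ i, c i ≤ z i ∧ z i ≤ d i ∧ 0 ≤ z i) :
    ∃ y : Fin N → ℝ, (∀ i, c i ≤ y i ∧ y i ≤ d i) ∧ ∑ i, y i = 1 ∧ (∀ i, 0 ≤ y i) ∧
      ∑ i, |y i - z i| ≤ |(∑ i, z i) - 1| := by
  rcases le_or_gt (∑ i, z i) 1 with hs | hs
  · -- increase toward d
    have hσ : 1 ≤ ∑ i, d i := hq1 ▸ Finset.sum_le_sum (fun i _ => (hqB i).2)
    obtain ⟨y, hy1, hy2⟩ := adjust z d (fun i => (hz i).2.1) hs hσ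
    refine ⟨y, fun i => ⟨le_trans (hz i).1 (hy1 i).1, (hy1 i).2⟩, hy2,
      fun i => le_trans (hz i).2.2 (hy1 i).1, ?_⟩
    have : ∑ i, |y i - z i| = ∑ i, (y i - z i) :=
      Finset.sum_congr rfl fun i _ => abs_of_nonneg (sub_nonneg.mpr (hy1 i).1)
    rw [this, Finset.sum_sub_distrib, hy2, abs_of_nonpos (by linarith)]
    linarith
  · -- decrease toward m = max c 0
    set m : Fin N → ℝ := fun i => max (c i) 0 with hm
    have hmz : ∀ i, m i ≤ z i := fun i => max_le (hz i).1 (hz i).2.2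
    have hsm : ∑ i, m i ≤ 1 := hq1 ▸ Finset.sum_le_sum (fun i _ => max_le (hqB i).1 (hq0 i))
    obtain ⟨y, hy1, hy2⟩ := adjust m z hmz hsm (le_of_lt hs)
    refine ⟨y, fun i => ⟨le_trans (le_max_left _ _) (hy1 i).1,
      le_trans (hy1 i).2 (hz i).2.1⟩, hy2,
      fun i => le_trans (le_max_right _ _) (hy1 i).1, ?_⟩
    have : ∑ i, |y i - z i| = ∑ i, (z i - y i) :=
      Finset.sum_congr rfl fun i _ => by
        rw [abs_sub_comm]; exact abs_of_nonneg (sub_nonneg.mpr (hy1 i).2)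
    rw [this, Finset.sum_sub_distrib, hy2, abs_of_nonneg (by linarith)]

lemma one_side {N : ℕ} (a b c d : Fin N → ℝ)
    (hab : ∀ i, a i ≤ b i) (hcd : ∀ i, c i ≤ d i)
    (A B : Set (E N))
    (hA : A = {w | ∀ i, w i ∈ Set.Icc (a i) (b i)})
    (hB : B = {w | ∀ i, w i ∈ Set.Icc (c i) (d i)})
    (hBne : (B ∩ simplex N).Nonempty) :
    ∀ x ∈ A ∩ simplex N, ∃ y ∈ B ∩ simplex N,
      dist x y ≤ 2 * ∑ i, max |a i - c i| |b i - d i| := by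
  obtain ⟨q, hqB, hq1, hq0⟩ := hBne
  rw [hB] at hqB
  rintro x ⟨hxA, hx1, hx0⟩
  rw [hA] at hxA
  set δ : ℝ := ∑ i, max |a i - c i| |b i - d i| with hδ
  -- clamp x into [c,d]
  set z : Fin N → ℝ := fun i => max (c i) (min (x i) (d i)) with hzdef
  have hzB : ∀ i, c i ≤ z i ∧ z i ≤ d i ∧ 0 ≤ z i := by
    intro i
    refine ⟨le_max_left _ _, max_le (hcd i) (min_le_right _ _), ?_⟩
    have hd0 : 0 ≤ d i := le_trans (hq0 i) (hqB i).2
    exact le_trans (le_min (hx0 i) hd0) (le_max_right _ _)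
  have hclamp : ∀ i, |x i - z i| ≤ max |a i - c i| |b i - d i| := by
    intro i
    rcases le_or_gt (x i) (c i) with h1 | h1
    · have hz : z i = c i := by
        rw [hzdef]; simp only
        rw [min_eq_left (le_trans h1 (hcd i)), max_eq_left h1]
      rw [hz, abs_sub_comm, abs_of_nonneg (by linarith)]
      refine le_trans ?_ (le_max_left _ _)
      have := (hxA i).1
      rw [abs_sub_comm]
      calc c i - x i ≤ c i - a i := by linarith
        _ ≤ |c i - a i| := le_abs_self _
    · rcases le_or_gt (d i) (x i) with h2 | h2
      · have hz : z i = d i := by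
          rw [hzdef]; simp only
          rw [min_eq_right h2, max_eq_right (hcd i)]
        rw [hz, abs_of_nonneg (by linarith)]
        refine le_trans ?_ (le_max_right _ _)
        have := (hxA i).2
        calc x i - d i ≤ b i - d i := by linarith
          _ ≤ |b i - d i| := le_abs_self _
      · have hz : z i = x i := by
          rw [hzdef]; simp only
          rw [min_eq_left (le_of_lt h2), max_eq_right (le_of_lt h1)]
        rw [hz]; simp
  have hxz : ∑ i, |x i - z i| ≤ δ := Finset.sum_le_sum fun i _ => hclamp i
  have hsz : |(∑ i, z i) - 1| ≤ δ := by
    have : |(∑ i, z i) - 1| = |∑ i, (z i - x i)| := by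
      rw [Finset.sum_sub_distrib, hx1]
    rw [this]
    calc |∑ i, (z i - x i)| ≤ ∑ i, |z i - x i| := Finset.abs_sum_le_sum_abs _ _
      _ = ∑ i, |x i - z i| := Finset.sum_congr rfl fun i _ => abs_sub_comm _ _
      _ ≤ δ := hxz
  obtain ⟨y, hyB, hy1, hy0, hyz⟩ := key c d q (fun i => ⟨(hqB i).1, (hqB i).2⟩) hq1 hq0 z hzB
  refine ⟨WithLp.toLp 2 y, ⟨by rw [hB]; exact fun i => ⟨(hyB i).1, (hyB i).2⟩, hy1, hy0⟩, ?_⟩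
  calc dist x (WithLp.toLp 2 y : E N) ≤ ∑ i, |x i - y i| := l2_le_l1 _ _
    _ ≤ ∑ i, (|x i - z i| + |z i - y i|) :=
        Finset.sum_le_sum fun i _ => abs_sub_le _ _ _
    _ = (∑ i, |x i - z i|) + ∑ i, |y i - z i| := by
        rw [Finset.sum_add_distrib]
        congr 1
        exact Finset.sum_congr rfl fun i _ => abs_sub_comm _ _
    _ ≤ δ + δ := add_le_add hxz (le_trans hyz hsz)
    _ = 2 * δ := by ring

theorem stmt9 {N : ℕ} (a b c d : Fin N → ℝ)
    (hab : ∀ i, a i ≤ b i) (hcd : ∀ i, c i ≤ d i)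
    (A B : Set (E N))
    (hA : A = {w | ∀ i, w i ∈ Set.Icc (a i) (b i)})
    (hB : B = {w | ∀ i, w i ∈ Set.Icc (c i) (d i)})
    (hAne : (A ∩ simplex N).Nonempty) (hBne : (B ∩ simplex N).Nonempty) :
    Metric.hausdorffDist (A ∩ simplex N) (B ∩ simplex N) ≤
      4 * ∑ i, max |a i - c i| |b i - d i| := by
  set δ : ℝ := ∑ i, max |a i - c i| |b i - d i| with hδ
  have hδ0 : 0 ≤ δ := Finset.sum_nonneg fun i _ => le_trans (abs_nonneg _) (le_max_left _ _)
  have h1 := one_side a b c d hab hcd A B hA hB hBne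
  have h2 := one_side c d a b hcd hab B A hB hA hAne
  have hsym : ∑ i, max |c i - a i| |d i - b i| = δ := by
    rw [hδ]
    exact Finset.sum_congr rfl fun i _ => by rw [abs_sub_comm (c i), abs_sub_comm (d i)]
  rw [hsym] at h2
  refine Metric.hausdorffDist_le_of_mem_dist (by linarith) ?_ ?_
  · intro x hx
    obtain ⟨y, hy, hd⟩ := h1 x hx
    exact ⟨y, hy, by linarith⟩
  · intro x hx
    obtain ⟨y, hy, hd⟩ := h2 x hx
    exact ⟨y, hy, by linarith⟩
end
end
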